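/- arXiv:hep-th/9709169 — 2 statements merged into one kernel-verified Lean document; each statement's English description precedes it below -/
import Mathlib

section
/- Fix E > 0. The set P(E) of density operators ρ with Tr(ρ H₀) ≤ E is complete in the Hilbert–Schmidt norm: every sequence in P(E) that is Cauchy with respect to ‖·‖₂ converges in ‖·‖₂ to an element of P(E). -/
open Filter
open scoped ENNReal InnerProductSpace ComplexOrder
open scoped NNReal

variable {H : Type*} [NormedAddCommGroup H] [InnerProductSpace ℂ H] [CompleteSpace H]

/-- The (squared) Hilbert–Schmidt norm of an operator, computed via the matrix
elements in the orthonormal Hilbert basis `e`, valued in `[0,∞]`. -/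
noncomputable def hsNormSq (e : HilbertBasis ℕ ℂ H) (A : H →L[ℂ] H) : ℝ≥0∞ :=
  ∑' p : ℕ × ℕ, (‖⟪e p.1, A (e p.2)⟫_ℂ‖₊ : ℝ≥0∞) ^ 2

/-- The Hilbert–Schmidt norm `‖A‖₂`, valued in `[0,∞]`. -/
noncomputable def hsNorm (e : HilbertBasis ℕ ℂ H) (A : H →L[ℂ] H) : ℝ≥0∞ :=
  hsNormSq e A ^ (1 / 2 : ℝ)

/-- A density operator: a positive (self-adjoint, `⟪x, ρ x⟫ ≥ 0`) trace-class
operator of trace one (the trace being `Σ_n ⟪e n, ρ (e n)⟫` in the basis `e`). -/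
def IsDensityOp (e : HilbertBasis ℕ ℂ H) (ρ : H →L[ℂ] H) : Prop :=
  ρ.IsPositive ∧ (Summable fun n : ℕ => RCLike.re ⟪e n, ρ (e n)⟫_ℂ) ∧
    ∑' n : ℕ, RCLike.re ⟪e n, ρ (e n)⟫_ℂ = 1

/-- `Tr(ρ H₀)` for the positive diagonal operator `H₀` with `H₀ e_n = E_n e_n`:
the sum `Σ_n E_n ⟪e n, ρ (e n)⟫`, valued in `[0,∞]`. -/
noncomputable def energyTrace (e : HilbertBasis ℕ ℂ H) (En : ℕ → ℝ) (ρ : H →L[ℂ] H) : ℝ≥0∞ :=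
  ∑' n : ℕ, ENNReal.ofReal (En n * RCLike.re ⟪e n, ρ (e n)⟫_ℂ)

/-- The set `P(E)` of density operators with `Tr(ρ H₀) ≤ E`. -/
noncomputable def PE (e : HilbertBasis ℕ ℂ H) (En : ℕ → ℝ) (E : ℝ) : Set (H →L[ℂ] H) :=
  {ρ | IsDensityOp e ρ ∧ energyTrace e En ρ ≤ ENNReal.ofReal E}

/-- A sequence of operators is Cauchy with respect to the Hilbert–Schmidt norm. -/
def HSCauchy (e : HilbertBasis ℕ ℂ H) (ρ : ℕ → H →L[ℂ] H) : Prop :=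
  ∀ ε : ℝ, 0 < ε → ∃ N : ℕ, ∀ i j : ℕ, N ≤ i → N ≤ j →
    hsNorm e (ρ i - ρ j) < ENNReal.ofReal ε

-- Fatou-type lemma

private lemma tsum_le_liminf_aux {ι : Type*} (f : ι → ℝ≥0∞) (g : ℕ → ι → ℝ≥0∞)
    (h : ∀ p, Tendsto (fun j => g j p) atTop (nhds (f p))) :
    ∑' p, f p ≤ liminf (fun j => ∑' p, g j p) atTop := by
  rw [ENNReal.tsum_eq_iSup_sum]
  refine iSup_le fun s => ?_
  have h1 : Tendsto (fun j => ∑ p ∈ s, g j p) atTop (nhds (∑ p ∈ s, f p)) :=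
    tendsto_finset_sum _ fun p _ => h p
  calc ∑ p ∈ s, f p = liminf (fun j => ∑ p ∈ s, g j p) atTop := h1.liminf_eq.symm
    _ ≤ liminf (fun j => ∑' p, g j p) atTop :=
      liminf_le_liminf (Eventually.of_forall fun j => ENNReal.sum_le_tsum s)

private lemma parseval_nnnorm (e : HilbertBasis ℕ ℂ H) (z : H) :
    ∑' m : ℕ, (‖⟪e m, z⟫_ℂ‖₊ : ℝ≥0∞) ^ 2 = (‖z‖₊ : ℝ≥0∞) ^ 2 := by
  have h0 : HasSum (fun m : ℕ => ⟪z, e m⟫_ℂ * ⟪e m, z⟫_ℂ) ⟪z, z⟫_ℂ :=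
    e.hasSum_inner_mul_inner z z
  have h1 : HasSum (fun m : ℕ => ‖⟪e m, z⟫_ℂ‖ ^ 2) (‖z‖ ^ 2) := by
    have h2 := h0.mapL (RCLike.reCLM (K := ℂ))
    have h3 : ∀ m : ℕ, RCLike.reCLM (K := ℂ) (⟪z, e m⟫_ℂ * ⟪e m, z⟫_ℂ) = ‖⟪e m, z⟫_ℂ‖ ^ 2 := by
      intro m
      have hc : ⟪z, e m⟫_ℂ = (starRingEnd ℂ) ⟪e m, z⟫_ℂ := (inner_conj_symm _ _).symm
      rw [hc, RCLike.conj_mul]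
      simp
      norm_cast
    have h4 : RCLike.reCLM (K := ℂ) ⟪z, z⟫_ℂ = ‖z‖ ^ 2 := by
      simp [inner_self_eq_norm_sq]
      norm_cast
    rw [← h4]
    exact h2.congr_fun fun m => (h3 m).symm
  have hs : Summable fun m : ℕ => ‖⟪e m, z⟫_ℂ‖ ^ 2 := h1.summable
  calc ∑' m : ℕ, (‖⟪e m, z⟫_ℂ‖₊ : ℝ≥0∞) ^ 2
      = ∑' m : ℕ, ENNReal.ofReal (‖⟪e m, z⟫_ℂ‖ ^ 2) := by
        refine tsum_congr fun m => ?_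
        rw [ENNReal.ofReal_pow (norm_nonneg _), ofReal_norm, enorm_eq_nnnorm]
    _ = ENNReal.ofReal (∑' m : ℕ, ‖⟪e m, z⟫_ℂ‖ ^ 2) :=
        (ENNReal.ofReal_tsum_of_nonneg (fun m => sq_nonneg _) hs).symm
    _ = ENNReal.ofReal (‖z‖ ^ 2) := by rw [h1.tsum_eq]
    _ = (‖z‖₊ : ℝ≥0∞) ^ 2 := by
        rw [ENNReal.ofReal_pow (norm_nonneg _), ofReal_norm, enorm_eq_nnnorm]

private lemma hsNormSq_eq_adj (e : HilbertBasis ℕ ℂ H) (A : H →L[ℂ] H) :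
    hsNormSq e A = ∑' m : ℕ, (‖(ContinuousLinearMap.adjoint A) (e m)‖₊ : ℝ≥0∞) ^ 2 := by
  rw [hsNormSq, ENNReal.tsum_prod (f := fun m k => ((‖⟪e m, A (e k)⟫_ℂ‖₊ : ℝ≥0∞) ^ 2))]
  refine tsum_congr fun m => ?_
  rw [← parseval_nnnorm e ((ContinuousLinearMap.adjoint A) (e m))]
  refine tsum_congr fun k => ?_
  have hnorm : ‖⟪e k, (ContinuousLinearMap.adjoint A) (e m)⟫_ℂ‖ = ‖⟪e m, A (e k)⟫_ℂ‖ := by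
    rw [ContinuousLinearMap.adjoint_inner_right]
    exact norm_inner_symm (A (e k)) (e m)
  have hnn : ‖⟪e k, (ContinuousLinearMap.adjoint A) (e m)⟫_ℂ‖₊ = ‖⟪e m, A (e k)⟫_ℂ‖₊ :=
    NNReal.coe_injective (by simpa using hnorm)
  rw [hnn]

private lemma hsNormSq_eq_sq_hsNorm (e : HilbertBasis ℕ ℂ H) (A : H →L[ℂ] H) :
    hsNormSq e A = hsNorm e A ^ 2 := by
  rw [hsNorm, ← ENNReal.rpow_natCast (hsNormSq e A ^ (1 / 2 : ℝ)) 2, ← ENNReal.rpow_mul]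
  norm_num

private lemma hsNorm_le_of_sq_le (e : HilbertBasis ℕ ℂ H) (A : H →L[ℂ] H) {B : ℝ≥0∞}
    (h : hsNormSq e A ≤ B ^ 2) : hsNorm e A ≤ B := by
  have h2 := ENNReal.rpow_le_rpow h (by norm_num : (0:ℝ) ≤ 1/2)
  rw [hsNorm]
  refine h2.trans (le_of_eq ?_)
  rw [← ENNReal.rpow_natCast B 2, ← ENNReal.rpow_mul]
  norm_num

private lemma norm_apply_le_of_hsNormSq_le (e : HilbertBasis ℕ ℂ H) (A : H →L[ℂ] H)
    (C : ℝ≥0) (hC : hsNormSq e A ≤ (C : ℝ≥0∞) ^ 2) (y : H) : ‖A y‖ ≤ C * ‖y‖ := by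
  have key : ((‖A y‖₊ : ℝ≥0∞)) ^ 2 ≤ ((C * ‖y‖₊ : ℝ≥0) : ℝ≥0∞) ^ 2 := by
    calc (‖A y‖₊ : ℝ≥0∞) ^ 2
        = ∑' m : ℕ, (‖⟪e m, A y⟫_ℂ‖₊ : ℝ≥0∞) ^ 2 := (parseval_nnnorm e (A y)).symm
      _ ≤ ∑' m : ℕ, ((‖(ContinuousLinearMap.adjoint A) (e m)‖₊ : ℝ≥0∞) * (‖y‖₊ : ℝ≥0∞)) ^ 2 := by
          refine ENNReal.tsum_le_tsum fun m => ?_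
          have hA : ⟪e m, A y⟫_ℂ = ⟪(ContinuousLinearMap.adjoint A) (e m), y⟫_ℂ :=
            (ContinuousLinearMap.adjoint_inner_left A y (e m)).symm
          have hb : ‖⟪e m, A y⟫_ℂ‖₊ ≤ ‖(ContinuousLinearMap.adjoint A) (e m)‖₊ * ‖y‖₊ := by
            rw [hA]; exact nnnorm_inner_le_nnnorm _ _
          exact pow_le_pow_left₀ (by positivity) (by exact_mod_cast hb) 2
      _ = (∑' m : ℕ, (‖(ContinuousLinearMap.adjoint A) (e m)‖₊ : ℝ≥0∞) ^ 2) * (‖y‖₊ : ℝ≥0∞) ^ 2 := by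
          rw [← ENNReal.tsum_mul_right]
          exact tsum_congr fun m => mul_pow _ _ 2
      _ = hsNormSq e A * (‖y‖₊ : ℝ≥0∞) ^ 2 := by rw [hsNormSq_eq_adj e A]
      _ ≤ ((C : ℝ≥0∞) ^ 2) * (‖y‖₊ : ℝ≥0∞) ^ 2 := mul_le_mul_left hC _
      _ = _ := by push_cast; ring
  have key2 : ‖A y‖₊ ≤ C * ‖y‖₊ := by
    rw [← ENNReal.coe_pow, ← ENNReal.coe_pow, ENNReal.coe_le_coe] at key
    exact le_of_pow_le_pow_left₀ (by norm_num) (by positivity) key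
  calc ‖A y‖ = ((‖A y‖₊ : ℝ≥0) : ℝ) := rfl
    _ ≤ ((C * ‖y‖₊ : ℝ≥0) : ℝ) := by exact_mod_cast key2
    _ = C * ‖y‖ := by push_cast; rfl

set_option maxHeartbeats 1600000 in
/-- `P(E)` is complete in the Hilbert–Schmidt norm: every sequence in
`P(E)` that is `‖·‖₂`-Cauchy converges in `‖·‖₂` to an element of `P(E)`. -/
theorem PE_complete
    (e : HilbertBasis ℕ ℂ H) (En : ℕ → ℝ)
    (hEn0 : ∀ n, 0 ≤ En n) (hEnmono : Monotone En) (hEntop : Tendsto En atTop atTop)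
    (E : ℝ) (hE : 0 < E)
    (ρ : ℕ → H →L[ℂ] H) (hmem : ∀ i, ρ i ∈ PE e En E) (hcauchy : HSCauchy e ρ) :
    ∃ ρbar ∈ PE e En E,
      Tendsto (fun i => hsNorm e (ρ i - ρbar)) atTop (nhds 0) := by
  classical
  -- squared-HS Cauchy bound
  have hsq : ∀ ε : ℝ, 0 < ε → ∃ N : ℕ, ∀ i j, N ≤ i → N ≤ j →
      hsNormSq e (ρ i - ρ j) ≤ (ENNReal.ofReal ε) ^ 2 := by
    intro ε hε
    obtain ⟨N, hN⟩ := hcauchy ε hε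
    refine ⟨N, fun i j hi hj => ?_⟩
    have h := (hN i j hi hj).le
    rw [hsNormSq_eq_sq_hsNorm]
    exact pow_le_pow_left' h 2
  -- operator norm Cauchy
  have hop : CauchySeq ρ := by
    rw [Metric.cauchySeq_iff]
    intro ε hε
    obtain ⟨N, hN⟩ := hsq (ε/2) (by positivity)
    refine ⟨N, fun i hi j hj => ?_⟩
    have hbound : ∀ y, ‖(ρ i - ρ j) y‖ ≤ (ε/2).toNNReal * ‖y‖ := by
      intro y
      refine norm_apply_le_of_hsNormSq_le e _ _ ?_ y
      have hcoe : (((ε/2).toNNReal : ℝ≥0) : ℝ≥0∞) = ENNReal.ofReal (ε/2) := rfl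
      rw [hcoe]; exact hN i j hi hj
    have hnorm : ‖ρ i - ρ j‖ ≤ ε/2 := by
      refine ContinuousLinearMap.opNorm_le_bound _ (by positivity) ?_
      intro y
      have h := hbound y
      rwa [Real.coe_toNNReal _ (by positivity)] at h
    rw [dist_eq_norm]
    calc ‖ρ i - ρ j‖ ≤ ε/2 := hnorm
      _ < ε := by linarith
  obtain ⟨ρbar, hρbar⟩ := cauchySeq_tendsto_of_complete hop
  have happly : ∀ y : H, Tendsto (fun i => ρ i y) atTop (nhds (ρbar y)) := by
    intro y
    have hc : Continuous fun A : H →L[ℂ] H => A y :=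
      (ContinuousLinearMap.apply ℂ H y).continuous
    exact (hc.tendsto ρbar).comp hρbar
  have hinner : ∀ x y : H, Tendsto (fun i => ⟪x, ρ i y⟫_ℂ) atTop (nhds ⟪x, ρbar y⟫_ℂ) :=
    fun x y => tendsto_const_nhds.inner (happly y)
  have hdD : ∀ n, Tendsto (fun i => RCLike.re ⟪e n, ρ i (e n)⟫_ℂ) atTop
      (nhds (RCLike.re ⟪e n, ρbar (e n)⟫_ℂ)) := fun n =>
    (RCLike.continuous_re.tendsto _).comp (hinner (e n) (e n))
  have hd0 : ∀ i n, 0 ≤ RCLike.re ⟪e n, ρ i (e n)⟫_ℂ := by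
    intro i n
    have h := (hmem i).1.1.2 (e n)
    rwa [ContinuousLinearMap.reApplyInnerSelf_apply, inner_re_symm] at h
  have hD0 : ∀ n, 0 ≤ RCLike.re ⟪e n, ρbar (e n)⟫_ℂ := fun n =>
    ge_of_tendsto (hdD n) (Eventually.of_forall fun i => hd0 i n)
  -- self-adjointness of the limit
  have hsa : IsSelfAdjoint ρbar := by
    have h1 : Tendsto (fun i => star (ρ i)) atTop (nhds (star ρbar)) :=
      (continuous_star.tendsto ρbar).comp hρbar
    have h2 : (fun i => star (ρ i)) = ρ := funext fun i => (hmem i).1.1.isSelfAdjoint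
    rw [h2] at h1
    exact tendsto_nhds_unique h1 hρbar
  -- positivity of the limit
  have hpos : ρbar.IsPositive := by
    refine ⟨ContinuousLinearMap.isSelfAdjoint_iff_isSymmetric.mp hsa, fun x => ?_⟩
    have h1 : Tendsto (fun i => ContinuousLinearMap.reApplyInnerSelf (ρ i) x) atTop
        (nhds (ρbar.reApplyInnerSelf x)) := by
      simp only [ContinuousLinearMap.reApplyInnerSelf_apply]
      exact (RCLike.continuous_re.tendsto _).comp ((happly x).inner tendsto_const_nhds)
    exact ge_of_tendsto h1 (Eventually.of_forall fun i => (hmem i).1.1.2 x)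
  -- summability / bound for energy sequences
  have hgsum : ∀ i, Summable (fun n => En n * RCLike.re ⟪e n, ρ i (e n)⟫_ℂ) ∧
      ∑' n, En n * RCLike.re ⟪e n, ρ i (e n)⟫_ℂ ≤ E := by
    intro i
    have hfin : energyTrace e En (ρ i) ≤ ENNReal.ofReal E := (hmem i).2
    unfold energyTrace at hfin
    have hne : (∑' n, ENNReal.ofReal (En n * RCLike.re ⟪e n, ρ i (e n)⟫_ℂ)) ≠ ⊤ :=
      ne_top_of_le_ne_top ENNReal.ofReal_ne_top hfin
    have hsumm : Summable fun n => En n * RCLike.re ⟪e n, ρ i (e n)⟫_ℂ := by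
      have h := ENNReal.summable_toReal hne
      refine h.congr fun n => ?_
      rw [ENNReal.toReal_ofReal (mul_nonneg (hEn0 n) (hd0 i n))]
    refine ⟨hsumm, ?_⟩
    have h2 : ENNReal.ofReal (∑' n, En n * RCLike.re ⟪e n, ρ i (e n)⟫_ℂ) ≤ ENNReal.ofReal E := by
      rw [ENNReal.ofReal_tsum_of_nonneg (fun n => mul_nonneg (hEn0 n) (hd0 i n)) hsumm]
      exact hfin
    exact (ENNReal.ofReal_le_ofReal_iff hE.le).1 h2
  -- the diagonal of ρbar is summable with sum ≤ 1
  have hsum_le : ∀ s : Finset ℕ, ∑ n ∈ s, RCLike.re ⟪e n, ρbar (e n)⟫_ℂ ≤ 1 := by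
    intro s
    have hlim : Tendsto (fun i => ∑ n ∈ s, RCLike.re ⟪e n, ρ i (e n)⟫_ℂ) atTop
        (nhds (∑ n ∈ s, RCLike.re ⟪e n, ρbar (e n)⟫_ℂ)) :=
      tendsto_finset_sum _ fun n _ => hdD n
    refine le_of_tendsto hlim (Eventually.of_forall fun i => ?_)
    calc ∑ n ∈ s, RCLike.re ⟪e n, ρ i (e n)⟫_ℂ
        ≤ ∑' n, RCLike.re ⟪e n, ρ i (e n)⟫_ℂ :=
          Summable.sum_le_tsum s (fun n _ => hd0 i n) (hmem i).1.2.1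
      _ = 1 := (hmem i).1.2.2
  have hDsum : Summable (fun n => RCLike.re ⟪e n, ρbar (e n)⟫_ℂ) :=
    summable_of_sum_le hD0 hsum_le
  have hDle : ∑' n, RCLike.re ⟪e n, ρbar (e n)⟫_ℂ ≤ 1 :=
    Summable.tsum_le_of_sum_le hDsum hsum_le
  -- lower bound on the diagonal sum, via the uniform energy tail bound
  have hlow : ∀ δ : ℝ, 0 < δ → 1 - δ ≤ ∑' n, RCLike.re ⟪e n, ρbar (e n)⟫_ℂ := by
    intro δ hδ
    obtain ⟨N, hN⟩ := (hEntop.eventually_ge_atTop (E/δ + 1)).exists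
    have hENpos : 0 < En N := lt_of_lt_of_le (by positivity) hN
    have htail : ∀ i, ∑' j, RCLike.re ⟪e (j + N), ρ i (e (j + N))⟫_ℂ ≤ E / En N := by
      intro i
      have hsub : Summable fun j => RCLike.re ⟪e (j + N), ρ i (e (j + N))⟫_ℂ :=
        (summable_nat_add_iff N).2 (hmem i).1.2.1
      refine Summable.tsum_le_of_sum_le hsub fun t => ?_
      have h1 : En N * ∑ j ∈ t, RCLike.re ⟪e (j + N), ρ i (e (j + N))⟫_ℂ
          ≤ ∑ j ∈ t, En (j + N) * RCLike.re ⟪e (j + N), ρ i (e (j + N))⟫_ℂ := by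
        rw [Finset.mul_sum]
        refine Finset.sum_le_sum fun j _ => ?_
        exact mul_le_mul_of_nonneg_right (hEnmono (Nat.le_add_left N j)) (hd0 i _)
      have hsg : Summable fun j => En (j + N) * RCLike.re ⟪e (j + N), ρ i (e (j + N))⟫_ℂ :=
        (summable_nat_add_iff N).2 (hgsum i).1
      have h2 : ∑ j ∈ t, En (j + N) * RCLike.re ⟪e (j + N), ρ i (e (j + N))⟫_ℂ
          ≤ ∑' n, En n * RCLike.re ⟪e n, ρ i (e n)⟫_ℂ := by
        refine (Summable.sum_le_tsum t (fun j _ => mul_nonneg (hEn0 _) (hd0 i _)) hsg).trans ?_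
        exact Summable.tsum_le_tsum_of_inj (· + N) (add_left_injective N)
          (fun n _ => mul_nonneg (hEn0 _) (hd0 i _)) (fun j => le_refl _) hsg (hgsum i).1
      have h3 := h1.trans (h2.trans (hgsum i).2)
      rw [mul_comm] at h3
      exact (le_div_iff₀ hENpos).2 h3
    have hEd : E / En N ≤ δ := by
      rw [div_le_iff₀ hENpos]
      have h7 : δ * (E/δ + 1) ≤ δ * En N := mul_le_mul_of_nonneg_left hN hδ.le
      have h8 : δ * (E/δ + 1) = E + δ := by field_simp
      rw [mul_comm δ (En N)] at h7
      linarith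
    have hhead : ∀ i, 1 - δ ≤ ∑ n ∈ Finset.range N, RCLike.re ⟪e n, ρ i (e n)⟫_ℂ := by
      intro i
      have h5 : ∑ n ∈ Finset.range N, RCLike.re ⟪e n, ρ i (e n)⟫_ℂ
          + ∑' j, RCLike.re ⟪e (j + N), ρ i (e (j + N))⟫_ℂ = 1 := by
        rw [Summable.sum_add_tsum_nat_add N (hmem i).1.2.1]
        exact (hmem i).1.2.2
      have h4 : ∑' j, RCLike.re ⟪e (j + N), ρ i (e (j + N))⟫_ℂ ≤ δ := (htail i).trans hEd
      linarith
    have hlimD : Tendsto (fun i => ∑ n ∈ Finset.range N, RCLike.re ⟪e n, ρ i (e n)⟫_ℂ) atTop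
        (nhds (∑ n ∈ Finset.range N, RCLike.re ⟪e n, ρbar (e n)⟫_ℂ)) :=
      tendsto_finset_sum _ fun n _ => hdD n
    have h6 : 1 - δ ≤ ∑ n ∈ Finset.range N, RCLike.re ⟪e n, ρbar (e n)⟫_ℂ :=
      ge_of_tendsto hlimD (Eventually.of_forall hhead)
    exact h6.trans (Summable.sum_le_tsum _ (fun n _ => hD0 n) hDsum)
  have hDeq : ∑' n, RCLike.re ⟪e n, ρbar (e n)⟫_ℂ = 1 := by
    refine le_antisymm hDle ?_
    refine le_of_forall_pos_le_add fun δ hδ => ?_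
    have := hlow δ hδ
    linarith
  -- energy bound for ρbar, by Fatou
  have hET : energyTrace e En ρbar ≤ ENNReal.ofReal E := by
    have hFatou := tsum_le_liminf_aux
      (fun n => ENNReal.ofReal (En n * RCLike.re ⟪e n, ρbar (e n)⟫_ℂ))
      (fun i n => ENNReal.ofReal (En n * RCLike.re ⟪e n, ρ i (e n)⟫_ℂ))
      (fun n => (ENNReal.continuous_ofReal.tendsto _).comp (tendsto_const_nhds.mul (hdD n)))
    refine le_trans hFatou ?_
    calc liminf (fun i => ∑' n, ENNReal.ofReal (En n * RCLike.re ⟪e n, ρ i (e n)⟫_ℂ)) atTop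
        ≤ liminf (fun _ : ℕ => ENNReal.ofReal E) atTop :=
          liminf_le_liminf (Eventually.of_forall fun i => (hmem i).2)
      _ = ENNReal.ofReal E := liminf_const _
  -- HS convergence
  have hconv : Tendsto (fun i => hsNorm e (ρ i - ρbar)) atTop (nhds 0) := by
    rw [ENNReal.tendsto_nhds_zero]
    intro ε hε
    set ε' : ℝ := (min 1 ε).toReal with hε'
    have hε'pos : 0 < ε' := by
      rw [hε']
      refine ENNReal.toReal_pos ?_ ?_
      · exact (lt_min one_pos hε).ne'
      · exact ne_top_of_le_ne_top ENNReal.one_ne_top (min_le_left _ _)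
    have hε'le : ENNReal.ofReal ε' ≤ ε := by
      rw [hε', ENNReal.ofReal_toReal (ne_top_of_le_ne_top ENNReal.one_ne_top (min_le_left _ _))]
      exact min_le_right _ _
    obtain ⟨N, hN⟩ := hsq ε' hε'pos
    filter_upwards [eventually_ge_atTop N] with i hi
    have hpt : ∀ p : ℕ × ℕ, Tendsto
        (fun j => (‖⟪e p.1, (ρ i - ρ j) (e p.2)⟫_ℂ‖₊ : ℝ≥0∞) ^ 2) atTop
        (nhds ((‖⟪e p.1, (ρ i - ρbar) (e p.2)⟫_ℂ‖₊ : ℝ≥0∞) ^ 2)) := by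
      intro p
      have h1 : Tendsto (fun j => (ρ i - ρ j) (e p.2)) atTop
          (nhds ((ρ i - ρbar) (e p.2))) := by
        simp only [ContinuousLinearMap.sub_apply]
        exact tendsto_const_nhds.sub (happly (e p.2))
      have h2 : Tendsto (fun j => ⟪e p.1, (ρ i - ρ j) (e p.2)⟫_ℂ) atTop
          (nhds ⟪e p.1, (ρ i - ρbar) (e p.2)⟫_ℂ) := tendsto_const_nhds.inner h1
      simpa [ENNReal.coe_pow] using ENNReal.tendsto_coe.2 (h2.nnnorm.pow 2)
    have hF := tsum_le_liminf_aux
      (fun p : ℕ × ℕ => (‖⟪e p.1, (ρ i - ρbar) (e p.2)⟫_ℂ‖₊ : ℝ≥0∞) ^ 2)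
      (fun j p => (‖⟪e p.1, (ρ i - ρ j) (e p.2)⟫_ℂ‖₊ : ℝ≥0∞) ^ 2) hpt
    have hli : liminf (fun j => hsNormSq e (ρ i - ρ j)) atTop ≤ (ENNReal.ofReal ε') ^ 2 := by
      calc liminf (fun j => hsNormSq e (ρ i - ρ j)) atTop
          ≤ liminf (fun _ : ℕ => (ENNReal.ofReal ε') ^ 2) atTop :=
            liminf_le_liminf (eventually_atTop.2 ⟨N, fun j hj => hN i j hi hj⟩)
        _ = (ENNReal.ofReal ε') ^ 2 := liminf_const _
    have hSq : hsNormSq e (ρ i - ρbar) ≤ (ENNReal.ofReal ε') ^ 2 := by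
      refine le_trans ?_ hli
      exact hF
    exact (hsNorm_le_of_sq_le e _ hSq).trans hε'le
  exact ⟨ρbar, ⟨⟨hpos, hDsum, hDeq⟩, hET⟩, hconv⟩
end

section
/- Fix E > 0. The set P(E) of density operators ρ with Tr(ρ H₀) ≤ E is totally bounded in the Hilbert–Schmidt norm; equivalently, every sequence of elements of P(E) has a subsequence that is Cauchy with respect to ‖·‖₂. -/
open Filter
open scoped ENNReal InnerProductSpace ComplexOrder

variable {H : Type*} [NormedAddCommGroup H] [InnerProductSpace ℂ H] [CompleteSpace H]

/-! ### Auxiliary material -/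

/-- Cauchy–Schwarz for the nonnegative sesquilinear form of a positive operator. -/
lemma PEaux_posCS (T : H →L[ℂ] H) (hT : T.IsPositive) (x y : H) :
    ‖⟪x, T y⟫_ℂ‖ ^ 2 ≤ RCLike.re ⟪x, T x⟫_ℂ * RCLike.re ⟪y, T y⟫_ℂ := by
  have hsym : ∀ u v : H, (starRingEnd ℂ) ⟪v, T u⟫_ℂ = ⟪u, T v⟫_ℂ := by
    intro u v
    rw [inner_conj_symm]
    nth_rewrite 1 [← hT.isSelfAdjoint.adjoint_eq]
    exact ContinuousLinearMap.adjoint_inner_left T v u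
  letI c : PreInnerProductSpace.Core ℂ H :=
    { inner := fun u v => ⟪u, T v⟫_ℂ
      conj_inner_symm := fun u v => hsym u v
      re_inner_nonneg := fun u => hT.re_inner_nonneg_right u
      add_left := fun u v w => by simp [inner_add_left]
      smul_left := fun u v r => by simp [inner_smul_left]; ring }
  have h := @InnerProductSpace.Core.inner_mul_inner_self_le ℂ H _ _ _ c x y
  have hxy : @inner ℂ H c.toInner x y = ⟪x, T y⟫_ℂ := rfl
  have hyx : ‖@inner ℂ H c.toInner y x‖ = ‖⟪x, T y⟫_ℂ‖ := by
    show ‖⟪y, T x⟫_ℂ‖ = _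
    rw [← hsym x y, RCLike.norm_conj]
  have hxx : @inner ℂ H c.toInner x x = ⟪x, T x⟫_ℂ := rfl
  have hyy : @inner ℂ H c.toInner y y = ⟪y, T y⟫_ℂ := rfl
  rw [hxy, hyx, hxx, hyy] at h
  calc ‖⟪x, T y⟫_ℂ‖ ^ 2 = ‖⟪x, T y⟫_ℂ‖ * ‖⟪x, T y⟫_ℂ‖ := sq _
    _ ≤ _ := h

/-- The diagonal matrix elements, as `ℝ≥0∞`. -/
noncomputable def auxD (e : HilbertBasis ℕ ℂ H) (T : H →L[ℂ] H) (n : ℕ) : ℝ≥0∞ :=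
  ENNReal.ofReal (RCLike.re ⟪e n, T (e n)⟫_ℂ)

/-- The squared moduli of the matrix entries, as `ℝ≥0∞`. -/
noncomputable def auxf (e : HilbertBasis ℕ ℂ H) (A : H →L[ℂ] H) (p : ℕ × ℕ) : ℝ≥0∞ :=
  (‖⟪e p.1, A (e p.2)⟫_ℂ‖₊ : ℝ≥0∞) ^ 2

lemma hsNormSq_eq (e : HilbertBasis ℕ ℂ H) (A : H →L[ℂ] H) :
    hsNormSq e A = ∑' p : ℕ × ℕ, auxf e A p := rfl

lemma PEaux_enn_sq (z : ℂ) : ((‖z‖₊ : ℝ≥0∞)) ^ 2 = ENNReal.ofReal (‖z‖ ^ 2) := by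
  rw [ENNReal.ofReal_pow (norm_nonneg z), ofReal_norm]
  rfl

lemma auxf_sub (e : HilbertBasis ℕ ℂ H) (A B : H →L[ℂ] H) (p : ℕ × ℕ) :
    auxf e (A - B) p
      = ENNReal.ofReal (‖⟪e p.1, A (e p.2)⟫_ℂ - ⟪e p.1, B (e p.2)⟫_ℂ‖ ^ 2) := by
  rw [auxf, ← PEaux_enn_sq]
  congr 2
  simp [ContinuousLinearMap.sub_apply, inner_sub_right]

lemma PEaux_tsum_auxD (e : HilbertBasis ℕ ℂ H) (T : H →L[ℂ] H) (hT : IsDensityOp e T) :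
    ∑' n, auxD e T n = 1 := by
  unfold auxD
  rw [← ENNReal.ofReal_tsum_of_nonneg (fun n => hT.1.re_inner_nonneg_right (e n)) hT.2.1,
    hT.2.2, ENNReal.ofReal_one]

lemma PEaux_entry (e : HilbertBasis ℕ ℂ H) (T : H →L[ℂ] H) (hT : T.IsPositive) (p : ℕ × ℕ) :
    auxf e T p ≤ auxD e T p.1 * auxD e T p.2 := by
  rw [auxf, PEaux_enn_sq, auxD, auxD, ← ENNReal.ofReal_mul (hT.re_inner_nonneg_right (e p.1))]
  exact ENNReal.ofReal_le_ofReal (PEaux_posCS T hT (e p.1) (e p.2))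

lemma PEaux_tail (e : HilbertBasis ℕ ℂ H) (En : ℕ → ℝ) (hEn0 : ∀ n, 0 ≤ En n)
    (hEnmono : Monotone En) (T : H →L[ℂ] H) (hT : T.IsPositive) (N : ℕ) :
    ENNReal.ofReal (En N) * ∑' n, (if N ≤ n then auxD e T n else 0)
      ≤ energyTrace e En T := by
  calc ENNReal.ofReal (En N) * ∑' n, (if N ≤ n then auxD e T n else 0)
      = ∑' n, ENNReal.ofReal (En N) * (if N ≤ n then auxD e T n else 0) :=
        ENNReal.tsum_mul_left.symm
    _ ≤ ∑' n, ENNReal.ofReal (En n * RCLike.re ⟪e n, T (e n)⟫_ℂ) := by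
        refine ENNReal.tsum_le_tsum fun n => ?_
        by_cases h : N ≤ n
        · rw [if_pos h, auxD, ← ENNReal.ofReal_mul (hEn0 N)]
          exact ENNReal.ofReal_le_ofReal
            (mul_le_mul_of_nonneg_right (hEnmono h) (hT.re_inner_nonneg_right (e n)))
        · simp [if_neg h]
    _ = energyTrace e En T := rfl

lemma PEaux_offdiag (e : HilbertBasis ℕ ℂ H) (T : H →L[ℂ] H) (hT : IsDensityOp e T) (N : ℕ) :
    ∑' p : ℕ × ℕ, Set.indicator {q : ℕ × ℕ | N ≤ q.1 ∨ N ≤ q.2} (auxf e T) p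
      ≤ 2 * ∑' n, (if N ≤ n then auxD e T n else 0) := by
  set D : ℕ → ℝ≥0∞ := auxD e T with hD
  set g1 : ℕ → ℝ≥0∞ := fun n => if N ≤ n then D n else 0 with hg1
  have hpt : ∀ p : ℕ × ℕ, Set.indicator {q : ℕ × ℕ | N ≤ q.1 ∨ N ≤ q.2} (auxf e T) p
      ≤ g1 p.1 * D p.2 + D p.1 * g1 p.2 := by
    intro p
    by_cases h1 : N ≤ p.1
    · have hpS : p ∈ {q : ℕ × ℕ | N ≤ q.1 ∨ N ≤ q.2} := Or.inl h1
      rw [Set.indicator_of_mem hpS]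
      calc auxf e T p ≤ D p.1 * D p.2 := PEaux_entry e T hT.1 p
        _ = g1 p.1 * D p.2 := by rw [hg1]; simp [if_pos h1]
        _ ≤ _ := le_self_add
    · by_cases h2 : N ≤ p.2
      · have hpS : p ∈ {q : ℕ × ℕ | N ≤ q.1 ∨ N ≤ q.2} := Or.inr h2
        rw [Set.indicator_of_mem hpS]
        calc auxf e T p ≤ D p.1 * D p.2 := PEaux_entry e T hT.1 p
          _ = D p.1 * g1 p.2 := by rw [hg1]; simp [if_pos h2]
          _ ≤ _ := le_add_self
      · have hpS : p ∉ {q : ℕ × ℕ | N ≤ q.1 ∨ N ≤ q.2} := fun hq => hq.elim h1 h2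
        rw [Set.indicator_of_notMem hpS]
        exact zero_le
  calc ∑' p : ℕ × ℕ, Set.indicator {q : ℕ × ℕ | N ≤ q.1 ∨ N ≤ q.2} (auxf e T) p
      ≤ ∑' p : ℕ × ℕ, (g1 p.1 * D p.2 + D p.1 * g1 p.2) := ENNReal.tsum_le_tsum hpt
    _ = (∑' p : ℕ × ℕ, g1 p.1 * D p.2) + ∑' p : ℕ × ℕ, D p.1 * g1 p.2 := ENNReal.tsum_add
    _ = (∑' n, g1 n) * (∑' n, D n) + (∑' n, D n) * (∑' n, g1 n) := by
        rw [ENNReal.tsum_prod (f := fun a b => g1 a * D b),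
          ENNReal.tsum_prod (f := fun a b => D a * g1 b)]
        congr 1
        · rw [← ENNReal.tsum_mul_right]
          exact tsum_congr fun a => ENNReal.tsum_mul_left
        · rw [← ENNReal.tsum_mul_right]
          exact tsum_congr fun a => ENNReal.tsum_mul_left
    _ = 2 * ∑' n, g1 n := by
        rw [hD, PEaux_tsum_auxD e T hT, mul_one, one_mul, two_mul]

lemma PEaux_sub_sq (x y : ℂ) :
    ((‖x - y‖₊ : ℝ≥0∞)) ^ 2 ≤ 2 * (‖x‖₊ : ℝ≥0∞) ^ 2 + 2 * (‖y‖₊ : ℝ≥0∞) ^ 2 := by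
  have hre : ‖x - y‖ ^ 2 ≤ 2 * ‖x‖ ^ 2 + 2 * ‖y‖ ^ 2 := by
    nlinarith [norm_sub_le x y, norm_nonneg x, norm_nonneg y, norm_nonneg (x - y),
      sq_nonneg (‖x‖ - ‖y‖)]
  calc ((‖x - y‖₊ : ℝ≥0∞)) ^ 2 = ENNReal.ofReal (‖x - y‖ ^ 2) := PEaux_enn_sq _
    _ ≤ ENNReal.ofReal (2 * ‖x‖ ^ 2 + 2 * ‖y‖ ^ 2) := ENNReal.ofReal_le_ofReal hre
    _ = 2 * (‖x‖₊ : ℝ≥0∞) ^ 2 + 2 * (‖y‖₊ : ℝ≥0∞) ^ 2 := by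
        rw [ENNReal.ofReal_add (by positivity) (by positivity),
          ENNReal.ofReal_mul (by norm_num), ENNReal.ofReal_mul (by norm_num),
          PEaux_enn_sq, PEaux_enn_sq, ENNReal.ofReal_ofNat]

lemma auxf_sub_le (e : HilbertBasis ℕ ℂ H) (A B : H →L[ℂ] H) (p : ℕ × ℕ) :
    auxf e (A - B) p ≤ 2 * auxf e A p + 2 * auxf e B p := by
  have h : auxf e (A - B) p
      = ((‖⟪e p.1, A (e p.2)⟫_ℂ - ⟪e p.1, B (e p.2)⟫_ℂ‖₊ : ℝ≥0∞)) ^ 2 := by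
    rw [auxf_sub, PEaux_enn_sq]
  rw [h]
  exact PEaux_sub_sq _ _

/-- `P(E)` is totally bounded in the Hilbert–Schmidt norm: every
sequence of elements of `P(E)` has a subsequence that is `‖·‖₂`-Cauchy. -/
theorem PE_totally_bounded
    (e : HilbertBasis ℕ ℂ H) (En : ℕ → ℝ)
    (hEn0 : ∀ n, 0 ≤ En n) (hEnmono : Monotone En) (hEntop : Tendsto En atTop atTop)
    (E : ℝ) (hE : 0 < E)
    (ρ : ℕ → H →L[ℂ] H) (hmem : ∀ i, ρ i ∈ PE e En E) :
    ∃ φ : ℕ → ℕ, StrictMono φ ∧ HSCauchy e (ρ ∘ φ) := by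
  have hden : ∀ i, IsDensityOp e (ρ i) := fun i => (hmem i).1
  have hpos : ∀ i, (ρ i).IsPositive := fun i => (hden i).1
  have hd_le_one : ∀ i n, RCLike.re ⟪e n, ρ i (e n)⟫_ℂ ≤ 1 := by
    intro i n
    have h := Summable.le_tsum (hden i).2.1 n (fun j _ => (hpos i).re_inner_nonneg_right (e j))
    rw [(hden i).2.2] at h
    exact h
  have hball : ∀ (i : ℕ) (p : ℕ × ℕ),
      ⟪e p.1, ρ i (e p.2)⟫_ℂ ∈ Metric.closedBall (0 : ℂ) 1 := by
    intro i p
    rw [mem_closedBall_zero_iff]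
    have h1 : ‖⟪e p.1, ρ i (e p.2)⟫_ℂ‖ ^ 2 ≤ 1 := by
      have hcs := PEaux_posCS (ρ i) (hpos i) (e p.1) (e p.2)
      have hm := hd_le_one i p.1
      have hk := hd_le_one i p.2
      have hknn := (hpos i).re_inner_nonneg_right (e p.2)
      nlinarith
    exact (pow_le_one_iff_of_nonneg (norm_nonneg _) two_ne_zero).1 h1
  have hK : IsCompact (Set.univ.pi fun _ : ℕ × ℕ => Metric.closedBall (0 : ℂ) 1) :=
    isCompact_univ_pi fun _ => isCompact_closedBall 0 1
  obtain ⟨L, -, φ, hφ, hconv⟩ := hK.tendsto_subseq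
    (x := fun i (p : ℕ × ℕ) => ⟪e p.1, ρ i (e p.2)⟫_ℂ)
    (fun i => Set.mem_univ_pi.2 fun p => hball i p)
  have hptconv : ∀ p : ℕ × ℕ,
      Tendsto (fun i => ⟪e p.1, ρ (φ i) (e p.2)⟫_ℂ) atTop (nhds (L p)) := by
    intro p
    have h := tendsto_pi_nhds.1 hconv p
    simpa [Function.comp] using h
  have hcs : ∀ p : ℕ × ℕ, CauchySeq fun i => ⟪e p.1, ρ (φ i) (e p.2)⟫_ℂ :=
    fun p => (hptconv p).cauchySeq
  refine ⟨φ, hφ, ?_⟩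
  intro ε hε
  obtain ⟨N, hEN⟩ := (hEntop.eventually_ge_atTop (32 * E / ε ^ 2 + 1)).exists
  have hENpos : 0 < En N := lt_of_lt_of_le (by positivity) hEN
  have tail_le : ∀ i, ∑' n, (if N ≤ n then auxD e (ρ i) n else 0)
      ≤ ENNReal.ofReal (E / En N) := by
    intro i
    rw [ENNReal.ofReal_div_of_pos hENpos,
      ENNReal.le_div_iff_mul_le (Or.inl (ENNReal.ofReal_pos.2 hENpos).ne')
        (Or.inl ENNReal.ofReal_ne_top), mul_comm]
    exact (PEaux_tail e En hEn0 hEnmono (ρ i) (hpos i) N).trans (hmem i).2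
  set F : Finset (ℕ × ℕ) := Finset.range N ×ˢ Finset.range N with hF
  set c : ℝ := (F.card : ℝ) with hc
  have hc0 : (0 : ℝ) ≤ c := Nat.cast_nonneg _
  set δ : ℝ := ε / (2 * (c + 1)) with hδdef
  have hδ : 0 < δ := by rw [hδdef]; positivity
  have hMp : ∀ p : ℕ × ℕ, ∃ M, ∀ i ≥ M, ∀ j ≥ M,
      dist (⟪e p.1, ρ (φ i) (e p.2)⟫_ℂ) (⟪e p.1, ρ (φ j) (e p.2)⟫_ℂ) < δ :=
    fun p => Metric.cauchySeq_iff.1 (hcs p) δ hδ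
  choose M hM using hMp
  refine ⟨F.sup M, ?_⟩
  intro i j hi hj
  have hFc : ((F : Set (ℕ × ℕ))ᶜ) = {q : ℕ × ℕ | N ≤ q.1 ∨ N ≤ q.2} := by
    ext p
    simp only [hF, Set.mem_compl_iff, Finset.coe_product, Set.mem_prod, Finset.mem_coe,
      Finset.mem_range, Set.mem_setOf_eq, not_and_or, not_lt]
  have hsplit : hsNormSq e (ρ (φ i) - ρ (φ j))
      = (∑' p : ℕ × ℕ, (F : Set (ℕ × ℕ)).indicator (auxf e (ρ (φ i) - ρ (φ j))) p)
        + ∑' p : ℕ × ℕ,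
            Set.indicator {q : ℕ × ℕ | N ≤ q.1 ∨ N ≤ q.2} (auxf e (ρ (φ i) - ρ (φ j))) p := by
    rw [hsNormSq_eq, ← hFc, ← ENNReal.tsum_add]
    exact tsum_congr fun p =>
      (congrFun (Set.indicator_self_add_compl (F : Set (ℕ × ℕ)) (auxf e (ρ (φ i) - ρ (φ j)))) p).symm
  -- block estimate
  have hblock : ∑' p : ℕ × ℕ, (F : Set (ℕ × ℕ)).indicator (auxf e (ρ (φ i) - ρ (φ j))) p
      ≤ ENNReal.ofReal (ε ^ 2 / 4) := by
    rw [← tsum_subtype, Finset.tsum_subtype' F (auxf e (ρ (φ i) - ρ (φ j)))]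
    have hterm : ∀ p ∈ F, auxf e (ρ (φ i) - ρ (φ j)) p ≤ ENNReal.ofReal (δ ^ 2) := by
      intro p hp
      have hdij := hM p i (le_trans (Finset.le_sup hp) hi) j (le_trans (Finset.le_sup hp) hj)
      rw [dist_eq_norm] at hdij
      rw [auxf_sub]
      exact ENNReal.ofReal_le_ofReal (pow_le_pow_left₀ (norm_nonneg _) hdij.le 2)
    calc ∑ p ∈ F, auxf e (ρ (φ i) - ρ (φ j)) p
        ≤ ∑ _p ∈ F, ENNReal.ofReal (δ ^ 2) := Finset.sum_le_sum hterm
      _ = (F.card : ℝ≥0∞) * ENNReal.ofReal (δ ^ 2) := by rw [Finset.sum_const, nsmul_eq_mul]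
      _ = ENNReal.ofReal (c * δ ^ 2) := by
          rw [ENNReal.ofReal_mul hc0, hc, ENNReal.ofReal_natCast]
      _ ≤ ENNReal.ofReal (ε ^ 2 / 4) := by
          refine ENNReal.ofReal_le_ofReal ?_
          have h2c : (0 : ℝ) < (2 * (c + 1)) ^ 2 := by positivity
          rw [hδdef, div_pow, mul_div_assoc' c, div_le_div_iff₀ h2c (by norm_num : (0:ℝ) < 4)]
          nlinarith [mul_nonneg (sq_nonneg ε) hc0, sq_nonneg ε,
            mul_nonneg (mul_nonneg (sq_nonneg ε) hc0) hc0]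
  -- off-block estimate
  have hoff : ∑' p : ℕ × ℕ,
      Set.indicator {q : ℕ × ℕ | N ≤ q.1 ∨ N ≤ q.2} (auxf e (ρ (φ i) - ρ (φ j))) p
      ≤ ENNReal.ofReal (ε ^ 2 / 4) := by
    have hpoint : ∀ p : ℕ × ℕ,
        Set.indicator {q : ℕ × ℕ | N ≤ q.1 ∨ N ≤ q.2} (auxf e (ρ (φ i) - ρ (φ j))) p
        ≤ 2 * Set.indicator {q : ℕ × ℕ | N ≤ q.1 ∨ N ≤ q.2} (auxf e (ρ (φ i))) p
          + 2 * Set.indicator {q : ℕ × ℕ | N ≤ q.1 ∨ N ≤ q.2} (auxf e (ρ (φ j))) p := by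
      intro p
      by_cases hp : p ∈ {q : ℕ × ℕ | N ≤ q.1 ∨ N ≤ q.2}
      · rw [Set.indicator_of_mem hp, Set.indicator_of_mem hp, Set.indicator_of_mem hp]
        exact auxf_sub_le e _ _ p
      · rw [Set.indicator_of_notMem hp, Set.indicator_of_notMem hp,
          Set.indicator_of_notMem hp]
        simp
    have hsumi : ∑' p : ℕ × ℕ,
        Set.indicator {q : ℕ × ℕ | N ≤ q.1 ∨ N ≤ q.2} (auxf e (ρ (φ i))) p
        ≤ 2 * ENNReal.ofReal (E / En N) :=
      le_trans (PEaux_offdiag e (ρ (φ i)) (hden (φ i)) N) (mul_le_mul_right (tail_le (φ i)) 2)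
    have hsumj : ∑' p : ℕ × ℕ,
        Set.indicator {q : ℕ × ℕ | N ≤ q.1 ∨ N ≤ q.2} (auxf e (ρ (φ j))) p
        ≤ 2 * ENNReal.ofReal (E / En N) :=
      le_trans (PEaux_offdiag e (ρ (φ j)) (hden (φ j)) N) (mul_le_mul_right (tail_le (φ j)) 2)
    calc ∑' p : ℕ × ℕ,
        Set.indicator {q : ℕ × ℕ | N ≤ q.1 ∨ N ≤ q.2} (auxf e (ρ (φ i) - ρ (φ j))) p
        ≤ ∑' p : ℕ × ℕ,
            (2 * Set.indicator {q : ℕ × ℕ | N ≤ q.1 ∨ N ≤ q.2} (auxf e (ρ (φ i))) p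
              + 2 * Set.indicator {q : ℕ × ℕ | N ≤ q.1 ∨ N ≤ q.2} (auxf e (ρ (φ j))) p) :=
          ENNReal.tsum_le_tsum hpoint
      _ = 2 * (∑' p : ℕ × ℕ, Set.indicator {q : ℕ × ℕ | N ≤ q.1 ∨ N ≤ q.2} (auxf e (ρ (φ i))) p)
          + 2 * ∑' p : ℕ × ℕ, Set.indicator {q : ℕ × ℕ | N ≤ q.1 ∨ N ≤ q.2} (auxf e (ρ (φ j))) p := by
          rw [ENNReal.tsum_add, ENNReal.tsum_mul_left, ENNReal.tsum_mul_left]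
      _ ≤ 2 * (2 * ENNReal.ofReal (E / En N)) + 2 * (2 * ENNReal.ofReal (E / En N)) := by
          gcongr
      _ = 8 * ENNReal.ofReal (E / En N) := by ring
      _ = ENNReal.ofReal (8 * (E / En N)) := by
          rw [ENNReal.ofReal_mul (by norm_num), ENNReal.ofReal_ofNat]
      _ ≤ ENNReal.ofReal (ε ^ 2 / 4) := by
          refine ENNReal.ofReal_le_ofReal ?_
          have h32 : 32 * E / ε ^ 2 ≤ En N := by linarith
          have h32' : 32 * E ≤ En N * ε ^ 2 := by
            rwa [div_le_iff₀ (by positivity : (0:ℝ) < ε ^ 2)] at h32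
          rw [mul_div_assoc' 8, div_le_div_iff₀ hENpos (by norm_num : (0:ℝ) < 4)]
          linarith
  have hkey : hsNormSq e (ρ (φ i) - ρ (φ j)) ≤ ENNReal.ofReal (ε ^ 2 / 2) := by
    rw [hsplit]
    calc _ ≤ ENNReal.ofReal (ε ^ 2 / 4) + ENNReal.ofReal (ε ^ 2 / 4) := add_le_add hblock hoff
      _ = ENNReal.ofReal (ε ^ 2 / 2) := by
          rw [← ENNReal.ofReal_add (by positivity) (by positivity)]
          congr 1
          ring
  have hfin : hsNorm e (ρ (φ i) - ρ (φ j)) < ENNReal.ofReal ε := by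
    have h1 : hsNorm e (ρ (φ i) - ρ (φ j)) ≤ (ENNReal.ofReal (ε ^ 2 / 2)) ^ (1 / 2 : ℝ) :=
      ENNReal.rpow_le_rpow hkey (by norm_num)
    have h2 : (ENNReal.ofReal (ε ^ 2 / 2)) ^ (1 / 2 : ℝ)
        < (ENNReal.ofReal (ε ^ 2)) ^ (1 / 2 : ℝ) := by
      refine ENNReal.rpow_lt_rpow ?_ (by norm_num)
      rw [ENNReal.ofReal_lt_ofReal_iff (by positivity)]
      have : (0:ℝ) < ε ^ 2 := by positivity
      linarith
    have h3 : (ENNReal.ofReal (ε ^ 2)) ^ (1 / 2 : ℝ) = ENNReal.ofReal ε := by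
      rw [ENNReal.ofReal_rpow_of_pos (by positivity)]
      congr 1
      rw [← Real.rpow_natCast ε 2, ← Real.rpow_mul hε.le]
      norm_num
    exact lt_of_le_of_lt h1 (h3 ▸ h2)
  simpa [Function.comp] using hfin
end
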